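/- arXiv:2212.06293 — 10 statements merged into one kernel-verified Lean document; each statement's English description precedes it below -/
import Mathlib

section
/- Let E be a real vector space and K ⊆ E a relatively solid cone (icor K ≠ ∅). For any linear functional y' ∈ K⁺ and any k ∈ icor K with y'(k) = 0, one has y'(x) = 0 for all x ∈ K. Consequently K⁺ \ ℓ(K⁺) = {y' ∈ K⁺ \ {0} | ∃ k ∈ icor K : y'(k) > 0}. -/
open Pointwise

/-- For a relatively solid cone K: if y' ∈ K⁺ vanishes at some point of
icor K, then y' vanishes on K; consequently
K⁺ \ ℓ(K⁺) = {y' ∈ K⁺ \ {0} | ∃ k ∈ icor K, y'(k) > 0}. -/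
theorem stmt_3 {E : Type*} [AddCommGroup E] [Module ℝ E] (K : Set E)
    (hK0 : (0 : E) ∈ K) (hKcone : ∀ t : ℝ, 0 ≤ t → ∀ x ∈ K, t • x ∈ K)
    (icorK : Set E)
    (hicor : icorK = {x ∈ K | ∀ v ∈ Submodule.span ℝ (K - K), ∃ ε > (0 : ℝ),
      ∀ t ∈ Set.Icc (0 : ℝ) ε, x + t • v ∈ K})
    (hrelsolid : icorK.Nonempty) :
    (∀ y' : E →ₗ[ℝ] ℝ, (∀ k ∈ K, 0 ≤ y' k) →
      ∀ k ∈ icorK, y' k = 0 → ∀ x ∈ K, y' x = 0) ∧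
    ({y' : E →ₗ[ℝ] ℝ | (∀ k ∈ K, 0 ≤ y' k) ∧ ¬ (∀ k ∈ K, 0 ≤ (-y') k)}
      = {y' : E →ₗ[ℝ] ℝ | (∀ k ∈ K, 0 ≤ y' k) ∧ y' ≠ 0 ∧
          ∃ k ∈ icorK, 0 < y' k}) := by
  have key : ∀ y' : E →ₗ[ℝ] ℝ, (∀ k ∈ K, 0 ≤ y' k) →
      ∀ k ∈ icorK, y' k = 0 → ∀ x ∈ K, y' x = 0 := by
    intro y' hy k hk hyk x hx
    rw [hicor] at hk
    obtain ⟨hkK, hkv⟩ := hk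
    have hmem : -x ∈ Submodule.span ℝ (K - K) := by
      apply neg_mem
      exact Submodule.subset_span ⟨x, hx, 0, hK0, by simp⟩
    obtain ⟨ε, hε, ht⟩ := hkv (-x) hmem
    have h1 := hy _ (ht ε ⟨le_of_lt hε, le_refl ε⟩)
    simp only [map_add, map_smul, map_neg, hyk, smul_eq_mul] at h1
    have h2 := hy x hx
    nlinarith
  refine ⟨key, ?_⟩
  ext y'
  simp only [Set.mem_setOf_eq]
  constructor
  · rintro ⟨hy, hne⟩
    push_neg at hne
    obtain ⟨x, hx, hxlt⟩ := hne
    simp only [LinearMap.neg_apply, neg_nonneg, not_le] at hxlt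
    have hxpos : 0 < y' x := by linarith
    refine ⟨hy, ?_, ?_⟩
    · intro h; rw [h] at hxpos; simp at hxpos
    · obtain ⟨k, hk⟩ := hrelsolid
      refine ⟨k, hk, ?_⟩
      have hkK : k ∈ K := by rw [hicor] at hk; exact hk.1
      rcases lt_or_eq_of_le (hy k hkK) with h | h
      · exact h
      · exact absurd (key y' hy k hk h.symm x hx) (ne_of_gt hxpos)
  · rintro ⟨hy, hne, k, hk, hkpos⟩
    refine ⟨hy, ?_⟩
    intro h
    have hkK : k ∈ K := by rw [hicor] at hk; exact hk.1
    have := h k hkK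
    simp only [LinearMap.neg_apply, neg_nonneg] at this
    linarith
end

section
/- Let K ⊆ E be a cone generated by a nonempty set B (i.e., K = ℝ₊·B) with K ≠ E. Then cor K = ℙ · ((cor K) ∩ B), where ℙ denotes the positive reals and cor denotes the algebraic interior. -/
/-- If K = ℝ₊·B with K ≠ E, then cor K = ℙ·((cor K) ∩ B). -/
theorem stmt_4 {E : Type*} [AddCommGroup E] [Module ℝ E] (B K : Set E)
    (hB : B.Nonempty)
    (hK : K = {x : E | ∃ t : ℝ, 0 ≤ t ∧ ∃ b ∈ B, x = t • b})
    (hKne : K ≠ Set.univ)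
    (corK : Set E)
    (hcor : corK = {x ∈ K | ∀ v : E, ∃ ε > (0 : ℝ),
      ∀ t ∈ Set.Icc (0 : ℝ) ε, x + t • v ∈ K}) :
    corK = {x : E | ∃ t : ℝ, 0 < t ∧ ∃ b ∈ corK ∩ B, x = t • b} := by
  have hKscale : ∀ s : ℝ, 0 ≤ s → ∀ y ∈ K, s • y ∈ K := by
    intro s hs y hy
    rw [hK] at hy ⊢
    obtain ⟨t, ht, b, hb, rfl⟩ := hy
    exact ⟨s * t, mul_nonneg hs ht, b, hb, (mul_smul s t b).symm⟩
  have hcorscale : ∀ s : ℝ, 0 < s → ∀ x ∈ corK, s • x ∈ corK := by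
    intro s hs x hx
    rw [hcor] at hx ⊢
    obtain ⟨hxK, hxv⟩ := hx
    refine ⟨hKscale s hs.le x hxK, fun v => ?_⟩
    obtain ⟨ε, hε, h⟩ := hxv (s⁻¹ • v)
    refine ⟨ε, hε, fun t ht => ?_⟩
    have h2 := hKscale s hs.le _ (h t ht)
    have heq : s • (x + t • s⁻¹ • v) = s • x + t • v := by
      rw [smul_add, smul_smul, smul_smul, show s * t * s⁻¹ = t by
        field_simp]
    rwa [heq] at h2
  have h0 : (0 : E) ∉ corK := by
    intro h0
    apply hKne
    rw [Set.eq_univ_iff_forall]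
    intro v
    rw [hcor] at h0
    obtain ⟨-, hv⟩ := h0
    obtain ⟨ε, hε, h⟩ := hv v
    have hεv := h ε ⟨hε.le, le_refl ε⟩
    rw [zero_add] at hεv
    have := hKscale ε⁻¹ (by positivity) _ hεv
    rwa [smul_smul, inv_mul_cancel₀ hε.ne', one_smul] at this
  ext x
  constructor
  · intro hx
    have hxK : x ∈ K := by rw [hcor] at hx; exact hx.1
    rw [hK] at hxK
    obtain ⟨t, ht, b, hb, rfl⟩ := hxK
    have ht' : 0 < t := by
      rcases eq_or_lt_of_le ht with h | h
      · rw [← h, zero_smul] at hx; exact absurd hx h0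
      · exact h
    have hb' := hcorscale t⁻¹ (by positivity) _ hx
    rw [smul_smul, inv_mul_cancel₀ ht'.ne', one_smul] at hb'
    exact ⟨t, ht', b, ⟨hb', hb⟩, rfl⟩
  · rintro ⟨t, ht, b, ⟨hbc, hbB⟩, rfl⟩
    exact hcorscale t ht b hbc
end

section
/- Let E be a real separated locally convex topological vector space, K ⊆ E a nontrivial cone admitting a compact base B_K (i.e., B_K ⊆ K \ {0} is nonempty compact and every x ∈ K \ {0} has a unique representation x = λb with λ > 0, b ∈ B_K). Then the algebraic interior of the topological dual cone K⁺_τ := {x* ∈ E* | x*(k) ≥ 0 ∀ k ∈ K} equals K^#_τ := {x* ∈ E* | x*(k) > 0 ∀ k ∈ K \ {0}}. -/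
/-- In a real Hausdorff locally convex space, for a nontrivial cone with a
compact base, the algebraic interior of the topological dual cone equals
K^#_τ = {xs | xs(k) > 0 ∀ k ∈ K \ {0}}. -/
theorem stmt_6 {E : Type*} [AddCommGroup E] [Module ℝ E] [TopologicalSpace E]
    [IsTopologicalAddGroup E] [ContinuousSMul ℝ E] [LocallyConvexSpace ℝ E]
    [T2Space E]
    (K : Set E) (hK0 : (0 : E) ∈ K)
    (hKcone : ∀ t : ℝ, 0 ≤ t → ∀ x ∈ K, t • x ∈ K)
    (hKne : K ≠ {0}) (hKneE : K ≠ Set.univ)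
    (BK : Set E) (hBKsub : BK ⊆ K \ {0}) (hBKne : BK.Nonempty)
    (hBKcompact : IsCompact BK)
    (hbase : ∀ x ∈ K, x ≠ 0 →
      ∃! p : ℝ × E, 0 < p.1 ∧ p.2 ∈ BK ∧ x = p.1 • p.2) :
    {xs : E →L[ℝ] ℝ | (∀ k ∈ K, 0 ≤ xs k) ∧
        ∀ ys : E →L[ℝ] ℝ, ∃ ε > (0 : ℝ), ∀ t ∈ Set.Icc (0 : ℝ) ε,
          ∀ k ∈ K, 0 ≤ (xs + t • ys) k}
      = {xs : E →L[ℝ] ℝ | ∀ k ∈ K, k ≠ 0 → 0 < xs k} := by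
  ext xs
  simp only [Set.mem_setOf_eq]
  constructor
  · rintro ⟨hpos, halg⟩ k hkK hk0
    rcases lt_or_eq_of_le (hpos k hkK) with h | h
    · exact h
    exfalso
    obtain ⟨f, hf⟩ := SeparatingDual.exists_ne_zero (R := ℝ) hk0
    -- pick g with g k < 0
    obtain ⟨g, hg⟩ : ∃ g : E →L[ℝ] ℝ, g k < 0 := by
      rcases lt_or_gt_of_ne hf with h' | h'
      · exact ⟨f, h'⟩
      · exact ⟨-f, by simpa using neg_neg_iff_pos.mpr h'⟩
    obtain ⟨ε, hε, hεall⟩ := halg g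
    have := hεall ε ⟨hε.le, le_refl ε⟩ k hkK
    simp only [ContinuousLinearMap.add_apply, ContinuousLinearMap.smul_apply,
      smul_eq_mul] at this
    nlinarith
  · intro hpos
    refine ⟨fun k hk => ?_, fun ys => ?_⟩
    · by_cases h : k = 0
      · simp [h]
      · exact (hpos k hk h).le
    · obtain ⟨b0, hb0, hmin⟩ := hBKcompact.exists_isMinOn hBKne
        (xs.continuous.continuousOn)
      obtain ⟨b1, hb1, hmax⟩ := hBKcompact.exists_isMaxOn hBKne
        ((continuous_abs.comp ys.continuous).continuousOn)
      set m := xs b0 with hm_def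
      set M := |ys b1| with hM_def
      have hm : 0 < m := hpos b0 (hBKsub hb0).1 (hBKsub hb0).2
      have hM : 0 ≤ M := abs_nonneg _
      refine ⟨m / (M + 1), by positivity, fun t ht k hk => ?_⟩
      by_cases h : k = 0
      · simp [h]
      · obtain ⟨⟨l, b⟩, ⟨hl, hbB, hkeq⟩, _⟩ := hbase k hk h
        have hxb : m ≤ xs b := hmin hbB
        have hyb : |ys b| ≤ M := hmax hbB
        have hkey : 0 ≤ xs b + t * ys b := by
          have h1 : -(t * |ys b|) ≤ t * ys b := by
            nlinarith [neg_abs_le (ys b), ht.1]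
          have h2 : t * |ys b| ≤ (m / (M + 1)) * M := by
            apply mul_le_mul ht.2 hyb (abs_nonneg _) (by positivity)
          have h3 : (m / (M + 1)) * M ≤ m := by
            rw [div_mul_eq_mul_div, div_le_iff₀ (by linarith)]
            nlinarith
          linarith
        have : (xs + t • ys) k = l * (xs b + t * ys b) := by
          simp only [ContinuousLinearMap.add_apply, ContinuousLinearMap.smul_apply,
            smul_eq_mul, hkeq, map_smul, smul_eq_mul]
        rw [this]
        exact mul_nonneg hl.le hkey
end

section
/- Let E be a real separated locally convex space and K a nontrivial cone with compact base B_K. If x* ∈ E* satisfies x*(x) > 0 for all x ∈ B_K, then for every y* ∈ E* there exists ε > 0 such that (x* + λ y*)(k) ≥ 0 for all λ ∈ [0, ε] and all k ∈ K; in particular x* lies in the algebraic interior of the topological dual cone K⁺_τ. -/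
/-- If xs is positive on a compact base B_K of a nontrivial cone K, then
xs lies in the algebraic interior of the topological dual cone K⁺_τ. -/
theorem stmt_7 {E : Type*} [AddCommGroup E] [Module ℝ E] [TopologicalSpace E]
    [IsTopologicalAddGroup E] [ContinuousSMul ℝ E] [LocallyConvexSpace ℝ E]
    [T2Space E]
    (K : Set E) (hK0 : (0 : E) ∈ K)
    (hKcone : ∀ t : ℝ, 0 ≤ t → ∀ x ∈ K, t • x ∈ K)
    (hKne : K ≠ {0}) (hKneE : K ≠ Set.univ)
    (BK : Set E) (hBKsub : BK ⊆ K \ {0}) (hBKne : BK.Nonempty)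
    (hBKcompact : IsCompact BK)
    (hgen : K = {x : E | ∃ t : ℝ, 0 ≤ t ∧ ∃ b ∈ BK, x = t • b})
    (xs : E →L[ℝ] ℝ) (hpos : ∀ x ∈ BK, 0 < xs x) :
    (∀ ys : E →L[ℝ] ℝ, ∃ ε > (0 : ℝ), ∀ t ∈ Set.Icc (0 : ℝ) ε,
        ∀ k ∈ K, 0 ≤ (xs + t • ys) k) ∧
    (∀ k ∈ K, 0 ≤ xs k) := by
  -- min of xs on BK
  obtain ⟨b0, hb0, hmin⟩ := hBKcompact.exists_isMinOn hBKne
    (xs.continuous.continuousOn)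
  set m : ℝ := xs b0 with hm
  have hmpos : 0 < m := hpos b0 hb0
  have key : ∀ ys : E →L[ℝ] ℝ, ∃ ε > (0 : ℝ), ∀ t ∈ Set.Icc (0 : ℝ) ε,
      ∀ k ∈ K, 0 ≤ (xs + t • ys) k := by
    intro ys
    obtain ⟨b1, hb1, hmax⟩ := hBKcompact.exists_isMaxOn hBKne
      ((continuous_abs.comp ys.continuous).continuousOn)
    set M : ℝ := max |ys b1| 1 with hM
    have hMpos : (0 : ℝ) < M := lt_of_lt_of_le one_pos (le_max_right _ _)
    refine ⟨m / M, div_pos hmpos hMpos, ?_⟩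
    rintro t ⟨ht0, htε⟩ k hk
    rw [hgen] at hk
    obtain ⟨s, hs, b, hb, rfl⟩ := hk
    have hxb : m ≤ xs b := hmin hb
    have hyb : |ys b| ≤ M := le_trans (hmax hb) (le_max_left _ _)
    have : 0 ≤ xs b + t * ys b := by
      have h1 : t * |ys b| ≤ (m / M) * M :=
        mul_le_mul htε hyb (abs_nonneg _) (le_of_lt (div_pos hmpos hMpos))
      have h2 : (m / M) * M = m := div_mul_cancel₀ m (ne_of_gt hMpos)
      nlinarith [neg_abs_le (ys b), mul_nonneg ht0 (abs_nonneg (ys b))]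
    simp only [ContinuousLinearMap.add_apply, ContinuousLinearMap.smul_apply,
      map_smul, smul_eq_mul]
    nlinarith
  refine ⟨key, ?_⟩
  intro k hk
  obtain ⟨ε, hε, h⟩ := key 0
  have := h 0 ⟨le_rfl, le_of_lt hε⟩ k hk
  simpa using this
end

section
/- Let E be a real vector space, ψ a seminorm, and K a nontrivial cone with K^{a+} := {(x', α) ∈ K⁺ × ℝ₊ | x'(y) − αψ(y) ≥ 0 ∀ y ∈ K}. Then ℓ(K^{a+}) = ℓ(K⁺) × {0}; in particular K^{a+} is pointed if and only if K⁺ is pointed. -/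
/-- ℓ(K^{a+}) = ℓ(K⁺) × {0}; hence K^{a+} is pointed iff K⁺ is pointed. -/
theorem stmt_9 {E : Type*} [AddCommGroup E] [Module ℝ E] (ψ : E → ℝ)
    (hψ_add : ∀ x y : E, ψ (x + y) ≤ ψ x + ψ y)
    (hψ_smul : ∀ t : ℝ, 0 ≤ t → ∀ x : E, ψ (t • x) = t * ψ x)
    (hψ_symm : ∀ x : E, ψ (-x) = ψ x)
    (K : Set E) (hK0 : (0 : E) ∈ K)
    (hKcone : ∀ t : ℝ, 0 ≤ t → ∀ x ∈ K, t • x ∈ K)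
    (hKne : K ≠ {0}) (hKneE : K ≠ Set.univ)
    (Ka : Set ((E →ₗ[ℝ] ℝ) × ℝ))
    (hKa : Ka = {p : (E →ₗ[ℝ] ℝ) × ℝ | (∀ k ∈ K, 0 ≤ p.1 k) ∧ 0 ≤ p.2 ∧
      ∀ y ∈ K, 0 ≤ p.1 y - p.2 * ψ y}) :
    (Ka ∩ (-Ka) = {p : (E →ₗ[ℝ] ℝ) × ℝ |
        ((∀ k ∈ K, 0 ≤ p.1 k) ∧ (∀ k ∈ K, 0 ≤ (-p.1) k)) ∧ p.2 = 0}) ∧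
    ((Ka ∩ (-Ka) = {0}) ↔
      ({x' : E →ₗ[ℝ] ℝ | ∀ k ∈ K, 0 ≤ x' k} ∩
        (-{x' : E →ₗ[ℝ] ℝ | ∀ k ∈ K, 0 ≤ x' k}) = {0})) := by
  subst hKa
  have h1 : ({p : (E →ₗ[ℝ] ℝ) × ℝ | (∀ k ∈ K, 0 ≤ p.1 k) ∧ 0 ≤ p.2 ∧
      ∀ y ∈ K, 0 ≤ p.1 y - p.2 * ψ y} ∩
      (-{p : (E →ₗ[ℝ] ℝ) × ℝ | (∀ k ∈ K, 0 ≤ p.1 k) ∧ 0 ≤ p.2 ∧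
      ∀ y ∈ K, 0 ≤ p.1 y - p.2 * ψ y}) = {p : (E →ₗ[ℝ] ℝ) × ℝ |
        ((∀ k ∈ K, 0 ≤ p.1 k) ∧ (∀ k ∈ K, 0 ≤ (-p.1) k)) ∧ p.2 = 0}) := by
    ext p
    simp only [Set.mem_inter_iff, Set.mem_neg, Set.mem_setOf_eq, Prod.fst_neg, Prod.snd_neg,
      LinearMap.neg_apply]
    constructor
    · rintro ⟨⟨a1, a2, a3⟩, ⟨b1, b2, b3⟩⟩
      have hp2 : p.2 = 0 := le_antisymm (by linarith) a2
      exact ⟨⟨a1, b1⟩, hp2⟩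
    · rintro ⟨⟨a1, b1⟩, hp2⟩
      refine ⟨⟨a1, by rw [hp2], fun y hy => ?_⟩, ⟨b1, by rw [hp2]; norm_num, fun y hy => ?_⟩⟩
      · rw [hp2]; simpa using a1 y hy
      · rw [hp2]; simpa using b1 y hy
  refine ⟨h1, ?_⟩
  rw [h1]
  constructor
  · intro h
    ext x'
    simp only [Set.mem_inter_iff, Set.mem_neg, Set.mem_setOf_eq, Set.mem_singleton_iff]
    constructor
    · rintro ⟨c1, c2⟩
      have : ((x', (0:ℝ)) : (E →ₗ[ℝ] ℝ) × ℝ) ∈ ({p : (E →ₗ[ℝ] ℝ) × ℝ |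
        ((∀ k ∈ K, 0 ≤ p.1 k) ∧ (∀ k ∈ K, 0 ≤ (-p.1) k)) ∧ p.2 = 0}) := by
        exact ⟨⟨c1, fun k hk => by simpa using c2 k hk⟩, rfl⟩
      rw [h, Set.mem_singleton_iff, Prod.ext_iff] at this
      exact this.1
    · rintro rfl; simp
  · intro h
    ext p
    simp only [Set.mem_setOf_eq, Set.mem_singleton_iff]
    constructor
    · rintro ⟨⟨c1, c2⟩, hp2⟩
      have : p.1 ∈ ({x' : E →ₗ[ℝ] ℝ | ∀ k ∈ K, 0 ≤ x' k} ∩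
        (-{x' : E →ₗ[ℝ] ℝ | ∀ k ∈ K, 0 ≤ x' k})) := by
        refine ⟨c1, ?_⟩
        simp only [Set.mem_neg, Set.mem_setOf_eq, LinearMap.neg_apply]
        exact c2
      rw [h] at this
      exact Prod.ext this hp2
    · rintro rfl
      simp
end

section
/- Let E be a real topological vector space, ψ a seminorm on E, K a nontrivial cone with normlike-base B_K = {x ∈ K | ψ(x) = 1} (where ψ > 0 on K \ {0}). If there exists (x*, α) ∈ K^{a+}_τ with x* continuous and α > 0, then 0 ∉ cl(conv(B_K)). -/
/-- If (xs, α) ∈ K^{a+}_τ with α > 0, then 0 ∉ cl(conv(B_K)). -/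
theorem stmt_12 {E : Type*} [AddCommGroup E] [Module ℝ E] [TopologicalSpace E]
    [IsTopologicalAddGroup E] [ContinuousSMul ℝ E] (ψ : E → ℝ)
    (hψ_add : ∀ x y : E, ψ (x + y) ≤ ψ x + ψ y)
    (hψ_smul : ∀ t : ℝ, 0 ≤ t → ∀ x : E, ψ (t • x) = t * ψ x)
    (hψ_symm : ∀ x : E, ψ (-x) = ψ x)
    (K : Set E) (hK0 : (0 : E) ∈ K)
    (hKcone : ∀ t : ℝ, 0 ≤ t → ∀ x ∈ K, t • x ∈ K)
    (hKne : K ≠ {0}) (hKneE : K ≠ Set.univ)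
    (hψpos : ∀ x ∈ K, x ≠ 0 → 0 < ψ x)
    (BK : Set E) (hBK : BK = {x ∈ K | ψ x = 1})
    (hgen : K = {x : E | ∃ t : ℝ, 0 ≤ t ∧ ∃ b ∈ BK, x = t • b})
    (xs : E →L[ℝ] ℝ) (α : ℝ) (hα : 0 < α)
    (hmem : (∀ k ∈ K, 0 ≤ xs k) ∧ ∀ y ∈ K, 0 ≤ xs y - α * ψ y) :
    (0 : E) ∉ closure (convexHull ℝ BK) := by
  have hsub : closure (convexHull ℝ BK) ⊆ {x : E | α ≤ xs x} := by
    apply closure_minimal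
    · apply convexHull_min _ (convex_halfSpace_ge (LinearMap.isLinear xs.toLinearMap) α)
      intro x hx
      rw [hBK] at hx
      have := hmem.2 x hx.1
      simp only [Set.mem_setOf_eq, ContinuousLinearMap.coe_coe]
      rw [hx.2, mul_one] at this
      linarith
    · exact isClosed_le continuous_const xs.continuous
  intro h
  have := hsub h
  simp only [Set.mem_setOf_eq, map_zero] at this
  linarith
end

section
/- Let E be a real topological vector space, K a nontrivial cone with compact normlike-base B_K (w.r.t. a seminorm ψ positive on K\{0}). Then the algebraic interior of the topological augmented dual cone K^{a+}_τ := {(x*, α) ∈ K⁺_τ × ℝ₊ | x*(y) ≥ α for all y ∈ B_K} equals {(x*, α) ∈ K⁺_τ × (0,∞) | x*(y) > α for all y ∈ B_K}. -/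
/-- For a compact normlike-base B_K, the algebraic interior of
K^{a+}_τ equals {(x*, α) ∈ K⁺_τ × ℙ | x*(y) > α ∀ y ∈ B_K}. -/
theorem stmt_15 {E : Type*} [AddCommGroup E] [Module ℝ E] [TopologicalSpace E]
    [IsTopologicalAddGroup E] [ContinuousSMul ℝ E] (ψ : E → ℝ)
    (hψ_add : ∀ x y : E, ψ (x + y) ≤ ψ x + ψ y)
    (hψ_smul : ∀ t : ℝ, 0 ≤ t → ∀ x : E, ψ (t • x) = t * ψ x)
    (hψ_symm : ∀ x : E, ψ (-x) = ψ x)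
    (K : Set E) (hK0 : (0 : E) ∈ K)
    (hKcone : ∀ t : ℝ, 0 ≤ t → ∀ x ∈ K, t • x ∈ K)
    (hKne : K ≠ {0}) (hKneE : K ≠ Set.univ)
    (hψpos : ∀ x ∈ K, x ≠ 0 → 0 < ψ x)
    (BK : Set E) (hBK : BK = {x ∈ K | ψ x = 1})
    (hgen : K = {x : E | ∃ t : ℝ, 0 ≤ t ∧ ∃ b ∈ BK, x = t • b})
    (hBKcompact : IsCompact BK)
    (Ka : Set ((E →L[ℝ] ℝ) × ℝ))
    (hKa : Ka = {p : (E →L[ℝ] ℝ) × ℝ | (∀ k ∈ K, 0 ≤ p.1 k) ∧ 0 ≤ p.2 ∧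
      ∀ y ∈ BK, p.2 ≤ p.1 y}) :
    {p ∈ Ka | ∀ q : (E →L[ℝ] ℝ) × ℝ, ∃ ε > (0 : ℝ),
        ∀ t ∈ Set.Icc (0 : ℝ) ε, p + t • q ∈ Ka}
      = {p : (E →L[ℝ] ℝ) × ℝ | (∀ k ∈ K, 0 ≤ p.1 k) ∧ 0 < p.2 ∧
          ∀ y ∈ BK, p.2 < p.1 y} := by

  subst hKa
  have hBKne : BK.Nonempty := by
    rw [hgen] at hK0
    obtain ⟨t, ht, b, hb, h0⟩ := hK0
    exact ⟨b, hb⟩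
  ext p
  obtain ⟨f, α⟩ := p
  simp only [Set.mem_setOf_eq, Set.mem_sep_iff]
  constructor
  · rintro ⟨⟨hf, hα, hfy⟩, hcore⟩
    refine ⟨hf, ?_, ?_⟩
    · obtain ⟨ε, hε, h⟩ := hcore (0, -1)
      have := (h ε ⟨le_of_lt hε, le_refl ε⟩).2.1
      simp only [Prod.snd_add, Prod.smul_mk, smul_eq_mul, Prod.mk_add_mk] at this
      linarith [this]
    · intro y hy
      obtain ⟨ε, hε, h⟩ := hcore (0, 1)
      have := (h ε ⟨le_of_lt hε, le_refl ε⟩).2.2 y hy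
      simp only [Prod.smul_mk, Prod.mk_add_mk, smul_eq_mul, smul_zero,
        ContinuousLinearMap.add_apply, ContinuousLinearMap.zero_apply, add_zero] at this
      linarith
  · rintro ⟨hf, hα, hfy⟩
    refine ⟨⟨hf, le_of_lt hα, fun y hy => le_of_lt (hfy y hy)⟩, ?_⟩
    rintro ⟨g, β⟩
    obtain ⟨y₀, hy₀, hmin⟩ := hBKcompact.exists_isMinOn hBKne f.continuous.continuousOn
    set δ : ℝ := f y₀ - α with hδdef
    have hδpos : 0 < δ := sub_pos.mpr (hfy y₀ hy₀)
    obtain ⟨y₁, hy₁, hmax⟩ :=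
      hBKcompact.exists_isMaxOn hBKne (g.continuous.abs.continuousOn)
    set C : ℝ := |g y₁| + |β| + 1 with hCdef
    have hC : 0 < C := by positivity
    have hβC : |β| ≤ C := by
      have := abs_nonneg (g y₁); simp only [hCdef]; linarith
    have hgC : ∀ y ∈ BK, |g y| ≤ C := by
      intro y hy
      have h1 : |g y| ≤ |g y₁| := hmax hy
      have := abs_nonneg β
      simp only [hCdef]; linarith
    refine ⟨min (α / C) (δ / (2 * C)), lt_min (div_pos hα hC) (div_pos hδpos (by linarith)), ?_⟩
    rintro t ⟨ht0, htε⟩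
    have htC1 : t * C ≤ α := by
      have h1 : t ≤ α / C := le_trans htε (min_le_left _ _)
      calc t * C ≤ (α / C) * C := by nlinarith
        _ = α := div_mul_cancel₀ _ (ne_of_gt hC)
    have htC2 : t * C ≤ δ / 2 := by
      have h1 : t ≤ δ / (2 * C) := le_trans htε (min_le_right _ _)
      calc t * C ≤ (δ / (2 * C)) * C := by nlinarith
        _ ≤ δ / 2 := by rw [div_mul_eq_mul_div, div_le_div_iff₀ (by linarith) (by norm_num)]; ring_nf; nlinarith
    refine ⟨?_, ?_, ?_⟩
    · intro k hk
      rw [hgen] at hk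
      obtain ⟨s, hs, b, hb, rfl⟩ := hk
      have hfb : α + δ ≤ f b := by have : f y₀ ≤ f b := hmin hb; linarith
      have hgb := abs_le.mp (hgC b hb)
      simp only [Prod.fst_add, Prod.smul_mk, Prod.mk_add_mk, ContinuousLinearMap.add_apply,
        ContinuousLinearMap.coe_smul', Pi.smul_apply, smul_eq_mul, map_smul]
      have h1 : 0 ≤ f b + t * g b := by nlinarith
      have h2 : f (s • b) + t * g (s • b) = s * (f b + t * g b) := by
        rw [map_smul, map_smul]; simp [smul_eq_mul]; ring
      nlinarith [mul_nonneg hs h1]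
    · have hβ := abs_le.mp hβC
      simp only [Prod.snd_add, Prod.smul_mk, Prod.mk_add_mk, smul_eq_mul]
      nlinarith
    · intro y hy
      have hfb : α + δ ≤ f y := by have : f y₀ ≤ f y := hmin hy; linarith
      have hgb := abs_le.mp (hgC y hy)
      have hβ := abs_le.mp hβC
      simp only [Prod.fst_add, Prod.snd_add, Prod.smul_mk, Prod.mk_add_mk,
        ContinuousLinearMap.add_apply, ContinuousLinearMap.coe_smul', Pi.smul_apply,
        smul_eq_mul]
      nlinarith
end

section
/- (Proper cone separation) Let E be a real vector space, ψ a seminorm, K, A nontrivial cones with normlike-bases B_K, B_A, and suppose S_{−K} := conv(−B_K) has nonempty algebraic interior with S_A^0 ∩ cor(S_{−K}) = ∅, where S_A^0 := conv(B_A ∪ {0}). Then there exist a linear x' ∈ K⁺ \ {0} and α ≥ 0 such that x'(a) + αψ(a) ≥ 0 for all a ∈ A, x'(k) + αψ(k) ≤ 0 for all k ∈ −K, and x'(k) + αψ(k) < 0 for all k ∈ cor(−K). In particular A ∩ cor(−K) = ∅. -/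
open Set

lemma alg_sep {E : Type*} [AddCommGroup E] [Module ℝ E] (C : Set E)
    (hC : Convex ℝ C)
    (hcore : ∀ c ∈ C, ∀ v : E, ∃ ε > (0:ℝ), ∀ t ∈ Set.Icc (0:ℝ) ε, c + t • v ∈ C)
    (h0 : (0:E) ∉ C) {c₀ : E} (hc₀ : c₀ ∈ C) :
    ∃ g : E →ₗ[ℝ] ℝ, (∀ c ∈ C, g c ≤ 0) ∧ g c₀ ≤ -1 := by
  classical
  set D : Set E := {x : E | x + c₀ ∈ C} with hD
  have h0D : (0:E) ∈ D := by simpa [hD] using hc₀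
  have hDconv : Convex ℝ D := by
    intro x hx y hy a b ha hb hab
    have h1 : a • c₀ + b • c₀ = c₀ := by rw [← add_smul, hab, one_smul]
    have key : (a • x + b • y) + c₀ = a • (x + c₀) + b • (y + c₀) := by
      calc (a • x + b • y) + c₀ = (a • x + b • y) + (a • c₀ + b • c₀) := by rw [h1]
        _ = a • (x + c₀) + b • (y + c₀) := by rw [smul_add, smul_add]; abel
    show (a • x + b • y) + c₀ ∈ C
    rw [key]
    exact hC hx hy ha hb hab
  set S : E → Set ℝ := fun z => {t : ℝ | 0 < t ∧ t⁻¹ • z ∈ D} with hS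
  have hSne : ∀ z, (S z).Nonempty := by
    intro z
    obtain ⟨ε, hε, h⟩ := hcore c₀ hc₀ z
    refine ⟨ε⁻¹, inv_pos.2 hε, ?_⟩
    show (ε⁻¹ : ℝ)⁻¹ • z ∈ D
    rw [inv_inv]
    show ε • z + c₀ ∈ C
    rw [add_comm]
    exact h ε ⟨le_of_lt hε, le_rfl⟩
  have hSbdd : ∀ z, BddBelow (S z) := fun z => ⟨0, fun t ht => le_of_lt ht.1⟩
  set p : E → ℝ := fun z => sInf (S z) with hp
  have hpnn : ∀ z, 0 ≤ p z := fun z => le_csInf (hSne z) fun t ht => le_of_lt ht.1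
  have key : ∀ c : ℝ, 0 < c → ∀ z, ∀ t ∈ S z, c * t ∈ S (c • z) := by
    intro c hc z t ht
    refine ⟨mul_pos hc ht.1, ?_⟩
    have h1 : (c * t)⁻¹ • (c • z) = t⁻¹ • z := by
      rw [mul_inv, smul_smul, mul_comm c⁻¹, mul_assoc, inv_mul_cancel₀ (ne_of_gt hc), mul_one]
    rw [h1]; exact ht.2
  have hstep : ∀ c : ℝ, 0 < c → ∀ z, p (c • z) ≤ c * p z := by
    intro c hc z
    rw [show c * p z = c * sInf (S z) from rfl]
    have : p (c • z) / c ≤ sInf (S z) := by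
      refine le_csInf (hSne z) fun t ht => ?_
      rw [div_le_iff₀ hc, mul_comm]
      exact csInf_le (hSbdd _) (key c hc z t ht)
    rw [div_le_iff₀ hc] at this
    linarith [this]
  have hphom : ∀ c : ℝ, 0 < c → ∀ z, p (c • z) = c * p z := by
    intro c hc z
    refine le_antisymm (hstep c hc z) ?_
    have h2 := hstep c⁻¹ (inv_pos.2 hc) (c • z)
    rw [smul_smul, inv_mul_cancel₀ (ne_of_gt hc), one_smul] at h2
    calc c * p z ≤ c * (c⁻¹ * p (c • z)) := by
          exact mul_le_mul_of_nonneg_left h2 (le_of_lt hc)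
      _ = p (c • z) := by field_simp
  have hsub : ∀ x y, p (x + y) ≤ p x + p y := by
    intro x y
    refine le_of_forall_pos_le_add fun δ hδ => ?_
    obtain ⟨t, ht, htlt⟩ := exists_lt_of_csInf_lt (hSne x) (by linarith : p x < p x + δ/2)
    obtain ⟨u, hu, hult⟩ := exists_lt_of_csInf_lt (hSne y) (by linarith : p y < p y + δ/2)
    have htu : (0:ℝ) < t + u := add_pos ht.1 hu.1
    have mem : t + u ∈ S (x + y) := by
      refine ⟨htu, ?_⟩
      have heq : (t + u)⁻¹ • (x + y)
          = (t/(t+u)) • (t⁻¹ • x) + (u/(t+u)) • (u⁻¹ • y) := by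
        have htne : t ≠ 0 := ht.1.ne'
        have hune : u ≠ 0 := hu.1.ne'
        have htune : t + u ≠ 0 := htu.ne'
        rw [smul_smul, smul_smul, smul_add]
        congr 2
        · field_simp
        · field_simp
      rw [heq]
      exact hDconv ht.2 hu.2 (div_nonneg ht.1.le htu.le) (div_nonneg hu.1.le htu.le)
        (by rw [← add_div, div_self (ne_of_gt htu)])
    calc p (x + y) ≤ t + u := csInf_le (hSbdd _) mem
      _ ≤ p x + p y + δ := by linarith
  have hD1 : ∀ d ∈ D, p d ≤ 1 := by
    intro d hd
    refine csInf_le (hSbdd _) ⟨one_pos, ?_⟩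
    simpa using hd
  have hm1 : 1 ≤ p (-c₀) := by
    by_contra h
    push_neg at h
    obtain ⟨t, ht, htlt⟩ := exists_lt_of_csInf_lt (hSne _) h
    have hmem : -c₀ ∈ D := by
      have h2 := hDconv (a := t) (b := 1 - t) ht.2 h0D (le_of_lt ht.1) (by linarith) (by ring)
      rw [smul_zero, add_zero, smul_smul, mul_inv_cancel₀ (ne_of_gt ht.1), one_smul] at h2
      exact h2
    have h3 : (-c₀) + c₀ ∈ C := hmem
    rw [neg_add_cancel] at h3
    exact h0 h3
  have hc₀ne : (-c₀ : E) ≠ 0 := by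
    intro h
    exact h0 (by rw [show c₀ = 0 from by simpa using congrArg Neg.neg h] at hc₀; exact hc₀)
  set f := (LinearPMap.mkSpanSingleton (K := ℝ) (-c₀) (p (-c₀)) hc₀ne : E →ₗ.[ℝ] ℝ) with hf_def
  have hf : ∀ x : f.domain, f x ≤ p x := by
    rintro ⟨x, hx⟩
    obtain ⟨a, ha⟩ := Submodule.mem_span_singleton.1 hx
    subst ha
    have happ : f ⟨a • -c₀, hx⟩ = a • p (-c₀) :=
      LinearPMap.mkSpanSingleton'_apply _ _ _ a hx
    show f ⟨a • -c₀, hx⟩ ≤ p (a • -c₀)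
    rw [happ]
    rcases lt_trichotomy a 0 with h | h | h
    · have hle : a • p (-c₀) ≤ 0 := by
        rw [smul_eq_mul]
        exact mul_nonpos_of_nonpos_of_nonneg (le_of_lt h) (hpnn _)
      exact le_trans hle (hpnn _)
    · subst h; simpa using hpnn 0
    · rw [hphom a h, smul_eq_mul]
  obtain ⟨g, hg_eq, hg_le⟩ := exists_extension_of_le_sublinear f p hphom hsub hf
  have hgc₀ : g (-c₀) = p (-c₀) :=
    (hg_eq ⟨-c₀, Submodule.mem_span_singleton_self _⟩).trans
      (LinearPMap.mkSpanSingleton_apply ℝ ℝ hc₀ne (p (-c₀)))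
  have hgc₀' : g c₀ = -p (-c₀) := by
    have : g (-c₀) = -g c₀ := map_neg g c₀
    linarith [hgc₀, this]
  refine ⟨g, ?_, by rw [hgc₀']; linarith⟩
  intro c hc
  have hd : c - c₀ ∈ D := by
    show (c - c₀) + c₀ ∈ C
    rw [sub_add_cancel]
    exact hc
  have h3 : g (c - c₀) ≤ 1 := le_trans (hg_le _) (hD1 _ hd)
  rw [map_sub] at h3
  rw [hgc₀'] at h3
  linarith

def algCore {E : Type*} [AddCommGroup E] [Module ℝ E] (S : Set E) : Set E :=
  {x | x ∈ S ∧ ∀ v : E, ∃ ε > (0:ℝ), ∀ t ∈ Set.Icc (0:ℝ) ε, x + t • v ∈ S}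

lemma algCore_seg {E : Type*} [AddCommGroup E] [Module ℝ E] {S : Set E}
    (hS : Convex ℝ S) {x y : E} (hx : x ∈ algCore S) (hy : y ∈ S)
    (l : ℝ) (hl : 0 < l) (hl1 : l ≤ 1) : l • x + (1 - l) • y ∈ algCore S := by
  constructor
  · exact hS hx.1 hy hl.le (by linarith) (by ring)
  · intro v
    obtain ⟨ε, hε, h⟩ := hx.2 v
    refine ⟨l * ε, mul_pos hl hε, fun t ht => ?_⟩
    have hmem : x + (t / l) • v ∈ S := by
      refine h (t / l) ⟨div_nonneg ht.1 hl.le, ?_⟩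
      rw [div_le_iff₀ hl]
      calc t ≤ l * ε := ht.2
        _ = ε * l := mul_comm _ _
    have key : l • x + (1 - l) • y + t • v = l • (x + (t / l) • v) + (1 - l) • y := by
      rw [smul_add, smul_smul, mul_div_cancel₀ _ hl.ne']
      abel
    rw [key]
    exact hS hmem hy hl.le (by linarith) (by ring)

lemma algCore_convex {E : Type*} [AddCommGroup E] [Module ℝ E] {S : Set E}
    (hS : Convex ℝ S) : Convex ℝ (algCore S) := by
  intro x hx y hy a b ha hb hab
  rcases eq_or_lt_of_le ha with h | h
  · have hb1 : b = 1 := by linarith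
    rw [← h, hb1, zero_smul, one_smul, zero_add]
    exact hy
  · have hb1 : b = 1 - a := by linarith
    rw [hb1]
    exact algCore_seg hS hx hy.1 a h (by linarith)

lemma algCore_open {E : Type*} [AddCommGroup E] [Module ℝ E] {S : Set E}
    (hS : Convex ℝ S) {x : E} (hx : x ∈ algCore S) (v : E) :
    ∃ ε > (0:ℝ), ∀ t ∈ Set.Icc (0:ℝ) ε, x + t • v ∈ algCore S := by
  obtain ⟨ε, hε, h⟩ := hx.2 v
  refine ⟨ε / 2, by positivity, fun t ht => ?_⟩
  rcases eq_or_lt_of_le ht.1 with h0 | h0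
  · rw [← h0, zero_smul, add_zero]
    exact hx
  · have htε : t / ε < 1 := (div_lt_one hε).2 (by linarith [ht.2])
    have htε0 : 0 ≤ t / ε := div_nonneg ht.1 hε.le
    have hl : (0:ℝ) < 1 - t / ε := by linarith
    have key : x + t • v = (1 - t / ε) • x + (1 - (1 - t / ε)) • (x + ε • v) := by
      have h2 : (1 - (1 - t / ε)) = t / ε := by ring
      have h3 : t / ε * ε = t := div_mul_cancel₀ t hε.ne'
      rw [h2, smul_add, smul_smul, h3, ← add_assoc, ← add_smul, sub_add_cancel, one_smul]
    rw [key]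
    exact algCore_seg hS hx (h ε ⟨hε.le, le_rfl⟩) _ hl (by linarith)

/-- Proper cone separation theorem in a real linear space. -/
theorem stmt_17 {E : Type*} [AddCommGroup E] [Module ℝ E] (ψ : E → ℝ)
    (hψ_add : ∀ x y : E, ψ (x + y) ≤ ψ x + ψ y)
    (hψ_smul : ∀ t : ℝ, 0 ≤ t → ∀ x : E, ψ (t • x) = t * ψ x)
    (hψ_symm : ∀ x : E, ψ (-x) = ψ x)
    (K A : Set E)
    (hKne : K ≠ {0}) (hKneE : K ≠ Set.univ)
    (hAne : A ≠ {0}) (hAneE : A ≠ Set.univ)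
    (hψposK : ∀ x ∈ K, x ≠ 0 → 0 < ψ x)
    (hψposA : ∀ x ∈ A, x ≠ 0 → 0 < ψ x)
    (BK BA : Set E)
    (hBK : BK = {x ∈ K | ψ x = 1}) (hBA : BA = {x ∈ A | ψ x = 1})
    (hgenK : K = {x : E | ∃ t : ℝ, 0 ≤ t ∧ ∃ b ∈ BK, x = t • b})
    (hgenA : A = {x : E | ∃ t : ℝ, 0 ≤ t ∧ ∃ b ∈ BA, x = t • b})
    (corK : Set E)
    (hcorK : corK = {x ∈ K | ∀ v : E, ∃ ε > (0 : ℝ),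
      ∀ t ∈ Set.Icc (0 : ℝ) ε, x + t • v ∈ K})
    (hKsolid : corK.Nonempty)
    (SmK SA0 : Set E)
    (hSmK : SmK = convexHull ℝ (-BK))
    (hSA0 : SA0 = convexHull ℝ (BA ∪ {0}))
    (corSmK : Set E)
    (hcor : corSmK = {x ∈ SmK | ∀ v : E, ∃ ε > (0 : ℝ),
      ∀ t ∈ Set.Icc (0 : ℝ) ε, x + t • v ∈ SmK})
    (hsolid : corSmK.Nonempty)
    (hdisj : SA0 ∩ corSmK = ∅) :
    (∃ x' : E →ₗ[ℝ] ℝ, (∀ k ∈ K, 0 ≤ x' k) ∧ x' ≠ 0 ∧ ∃ α : ℝ, 0 ≤ α ∧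
      (∀ a ∈ A, 0 ≤ x' a + α * ψ a) ∧
      (∀ k : E, -k ∈ K → x' k + α * ψ k ≤ 0) ∧
      (∀ k : E, -k ∈ corK → x' k + α * ψ k < 0)) ∧
    A ∩ (-corK) = ∅ := by
  classical
  obtain ⟨s₀, hs₀'⟩ := hsolid
  have hcor' : corSmK = algCore SmK := hcor
  have hcorK' : corK = algCore K := hcorK
  rw [hcor'] at hs₀' hdisj
  have hSmKconv : Convex ℝ SmK := hSmK ▸ convex_convexHull ℝ _
  have hSA0conv : Convex ℝ SA0 := hSA0 ▸ convex_convexHull ℝ _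
  have h0SA0 : (0:E) ∈ SA0 := by
    rw [hSA0]; exact subset_convexHull ℝ _ (Or.inr rfl)
  set C : Set E := {x : E | ∃ s ∈ algCore SmK, ∃ a ∈ SA0, x = s - a} with hCdef
  have hCconv : Convex ℝ C := by
    rintro x ⟨s1, hs1, a1, ha1, rfl⟩ y ⟨s2, hs2, a2, ha2, rfl⟩ c d hc hd hcd
    refine ⟨c • s1 + d • s2, algCore_convex hSmKconv hs1 hs2 hc hd hcd,
      c • a1 + d • a2, hSA0conv ha1 ha2 hc hd hcd, ?_⟩
    rw [smul_sub, smul_sub]; abel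
  have hCcore : ∀ c ∈ C, ∀ v : E, ∃ ε > (0:ℝ), ∀ t ∈ Set.Icc (0:ℝ) ε, c + t • v ∈ C := by
    rintro x ⟨s, hs, a, ha, rfl⟩ v
    obtain ⟨ε, hε, h⟩ := algCore_open hSmKconv hs v
    exact ⟨ε, hε, fun t ht => ⟨s + t • v, h t ht, a, ha, by abel⟩⟩
  have h0C : (0:E) ∉ C := by
    rintro ⟨s, hs, a, ha, hsa⟩
    have hse : s = a := by
      have := hsa.symm
      rwa [sub_eq_zero] at this
    rw [← hse] at ha
    have hx : s ∈ SA0 ∩ algCore SmK := ⟨ha, hs⟩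
    rw [hdisj] at hx
    exact hx
  have hc₀ : s₀ ∈ C := ⟨s₀, hs₀', 0, h0SA0, by rw [sub_zero]⟩
  obtain ⟨g, hgle, hgs₀⟩ := alg_sep C hCconv hCcore h0C hc₀
  have hgC : ∀ s ∈ algCore SmK, ∀ a ∈ SA0, g s ≤ g a := by
    intro s hs a ha
    have h1 := hgle _ ⟨s, hs, a, ha, rfl⟩
    rw [map_sub] at h1
    linarith
  -- seminorm facts
  have hψ0 : ψ 0 = 0 := by simpa using hψ_smul 0 le_rfl 0
  have hψnn : ∀ x : E, 0 ≤ ψ x := by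
    intro x
    have h1 := hψ_add x (-x)
    rw [hψ_symm, show x + -x = (0:E) by abel, hψ0] at h1
    linarith
  have hψSmK : ∀ s ∈ SmK, ψ s ≤ 1 := by
    intro s hs
    rw [hSmK] at hs
    have hsub : -BK ⊆ {x : E | ψ x ≤ 1} := by
      intro x hx
      have hmx : -x ∈ BK := Set.mem_neg.1 hx
      rw [hBK] at hmx
      have : ψ x = 1 := by rw [← hψ_symm x]; exact hmx.2
      exact le_of_eq this
    have hconv : Convex ℝ {x : E | ψ x ≤ 1} := by
      intro x hx y hy a b ha hb hab
      have h1 : ψ (a • x + b • y) ≤ a * ψ x + b * ψ y := by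
        calc ψ (a • x + b • y) ≤ ψ (a • x) + ψ (b • y) := hψ_add _ _
          _ = a * ψ x + b * ψ y := by rw [hψ_smul a ha, hψ_smul b hb]
      have h2 : a * ψ x ≤ a := by
        have := mul_le_mul_of_nonneg_left (show ψ x ≤ 1 from hx) ha
        linarith [this]
      have h3 : b * ψ y ≤ b := by
        have := mul_le_mul_of_nonneg_left (show ψ y ≤ 1 from hy) hb
        linarith [this]
      show ψ (a • x + b • y) ≤ 1
      linarith
    exact convexHull_min hsub hconv hs
  have hle : ∀ s ∈ SmK, ∀ a ∈ SA0, g s ≤ g a := by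
    intro s hs a ha
    by_contra hcon
    push_neg at hcon
    have hall : ∀ l : ℝ, 0 < l → l ≤ 1 → l * g s₀ + (1 - l) * g s ≤ g a := by
      intro l h1 h2
      have hmem := algCore_seg hSmKconv hs₀' hs l h1 h2
      have h3 := hgC _ hmem a ha
      rw [map_add, map_smul, map_smul, smul_eq_mul, smul_eq_mul] at h3
      exact h3
    set δ := g s - g a with hδdef
    have hδ : 0 < δ := by linarith
    set d := g s - g s₀ with hd
    rcases le_or_gt d 0 with h | h
    · have h1 := hall 1 one_pos le_rfl
      have : (1:ℝ) * g s₀ + (1 - 1) * g s = g s₀ := by ring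
      rw [this] at h1
      -- g s₀ ≤ g a, d ≤ 0 means g s ≤ g s₀, so g s ≤ g a, contradiction
      have : g s ≤ g s₀ := by simp only [hd] at h; linarith
      linarith
    · set l := min 1 (δ / (2 * d)) with hldef
      have hl0 : 0 < l := lt_min one_pos (by positivity)
      have hl1 : l ≤ 1 := min_le_left _ _
      have h1 := hall l hl0 hl1
      have h2 : l ≤ δ / (2 * d) := min_le_right _ _
      have h3 : l * d ≤ δ / 2 := by
        calc l * d ≤ (δ / (2 * d)) * d := mul_le_mul_of_nonneg_right h2 h.le
          _ = δ / 2 := by field_simp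
      have h4 : l * g s₀ + (1 - l) * g s = g s - l * d := by rw [hd]; ring
      rw [h4] at h1
      linarith
  have hs₀SmK : s₀ ∈ SmK := hs₀'.1
  have hneS : (g '' SmK).Nonempty := ⟨g s₀, s₀, hs₀SmK, rfl⟩
  have hbdd : BddAbove (g '' SmK) := by
    refine ⟨0, ?_⟩
    rintro y ⟨s, hs, rfl⟩
    have := hle s hs 0 h0SA0
    rwa [map_zero] at this
  set α := -sSup (g '' SmK) with hα
  have hαnn : 0 ≤ α := by
    have h1 : sSup (g '' SmK) ≤ 0 := by
      refine csSup_le hneS ?_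
      rintro y ⟨s, hs, rfl⟩
      have := hle s hs 0 h0SA0
      rwa [map_zero] at this
    rw [hα]; linarith
  have hub : ∀ s ∈ SmK, g s ≤ -α := by
    intro s hs
    have := le_csSup hbdd ⟨s, hs, rfl⟩
    rw [hα]; linarith
  have hlb : ∀ a ∈ SA0, -α ≤ g a := by
    intro a ha
    have h1 : sSup (g '' SmK) ≤ g a := by
      refine csSup_le hneS ?_
      rintro y ⟨s, hs, rfl⟩
      exact hle s hs a ha
    rw [hα]; linarith
  have hstrict : ∀ s ∈ algCore SmK, g s < -α := by
    intro s hs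
    obtain ⟨ε, hε, h⟩ := hs.2 (-s₀)
    have hmem : s + ε • (-s₀) ∈ SmK := h ε ⟨hε.le, le_rfl⟩
    have h1 := hub _ hmem
    rw [map_add, map_smul, smul_eq_mul, map_neg] at h1
    have h2 : ε * g s₀ ≤ ε * (-1) := mul_le_mul_of_nonneg_left hgs₀ hε.le
    nlinarith
  have hKscale : ∀ (c : ℝ), 0 ≤ c → ∀ x ∈ K, c • x ∈ K := by
    intro c hc x hx
    rw [hgenK] at hx ⊢
    obtain ⟨t, ht, b, hb, rfl⟩ := hx
    exact ⟨c * t, mul_nonneg hc ht, b, hb, (mul_smul c t b).symm⟩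
  have hgBK : ∀ b ∈ BK, α ≤ g b := by
    intro b hb
    have hmem : -b ∈ SmK := hSmK ▸ subset_convexHull ℝ _ (Set.neg_mem_neg.2 hb)
    have := hub _ hmem
    rw [map_neg] at this
    linarith
  have hgBA : ∀ b ∈ BA, -α ≤ g b := fun b hb =>
    hlb b (hSA0 ▸ subset_convexHull ℝ _ (Or.inl hb))
  have hKlow : ∀ x ∈ K, α * ψ x ≤ g x := by
    intro x hx
    rw [hgenK] at hx
    obtain ⟨t, ht, b, hb, rfl⟩ := hx
    have hψb : ψ b = 1 := by rw [hBK] at hb; exact hb.2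
    rw [map_smul, smul_eq_mul, hψ_smul t ht, hψb, mul_one]
    have := hgBK b hb
    nlinarith
  have hstrictK : ∀ k : E, -k ∈ algCore K → g k + α * ψ k < 0 := by
    intro k hk
    have hkK : -k ∈ K := hk.1
    have hkne : (-k : E) ≠ 0 := by
      intro h0k
      rw [h0k] at hk
      refine hKneE (Set.eq_univ_of_forall fun v => ?_)
      obtain ⟨ε, hε, h⟩ := hk.2 v
      have h1 : ε • v ∈ K := by
        have := h ε ⟨hε.le, le_rfl⟩
        rwa [zero_add] at this
      have h2 := hKscale ε⁻¹ (inv_pos.2 hε).le _ h1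
      rwa [smul_smul, inv_mul_cancel₀ hε.ne', one_smul] at h2
    have hkK' := hkK
    rw [hgenK] at hkK'
    obtain ⟨t, ht, b, hb, hkb⟩ := hkK'
    have hbK : b ∈ K ∧ ψ b = 1 := by rw [hBK] at hb; exact hb
    have hψk : ψ (-k) = t := by rw [hkb, hψ_smul t ht, hbK.2, mul_one]
    have htpos : 0 < t := by
      have := hψposK _ hkK hkne
      rwa [hψk] at this
    have hbcore : b ∈ algCore K := by
      refine ⟨hbK.1, fun v => ?_⟩
      obtain ⟨ε, hε, h⟩ := hk.2 v
      refine ⟨ε / t, div_pos hε htpos, fun s hs => ?_⟩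
      have hts : t * s ∈ Set.Icc (0:ℝ) ε := by
        constructor
        · exact mul_nonneg htpos.le hs.1
        · have := hs.2
          rw [le_div_iff₀ htpos] at this
          calc t * s = s * t := mul_comm _ _
            _ ≤ ε := this
      have h1 : -k + (t * s) • v ∈ K := h (t * s) hts
      have h2 := hKscale t⁻¹ (inv_pos.2 htpos).le _ h1
      rw [smul_add, smul_smul,
        show t⁻¹ * (t * s) = s from by field_simp] at h2
      have h3 : t⁻¹ • (-k) = b := by
        rw [hkb, smul_smul, inv_mul_cancel₀ htpos.ne', one_smul]
      rwa [h3] at h2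
    have hgb : α < g b := by
      rcases lt_or_ge α (g b) with h | h
      · exact h
      exfalso
      have hgbα : g b = α := le_antisymm h (hgBK b hb)
      have hlow : ∀ v : E, -(α * ψ v) ≤ g v := by
        intro v
        obtain ⟨ε, hε, h'⟩ := hbcore.2 v
        have h1 : b + ε • v ∈ K := h' ε ⟨hε.le, le_rfl⟩
        have h2 := hKlow _ h1
        have h3 : ψ b - ε * ψ v ≤ ψ (b + ε • v) := by
          have h4 := hψ_add (b + ε • v) (-(ε • v))
          rw [add_neg_cancel_right, hψ_symm, hψ_smul ε hε.le] at h4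
          linarith
        rw [map_add, map_smul, smul_eq_mul] at h2
        have h5 : α * (ψ b - ε * ψ v) ≤ α * ψ (b + ε • v) :=
          mul_le_mul_of_nonneg_left h3 hαnn
        rw [hbK.2] at h5
        have h6 : ε * (-(α * ψ v)) ≤ ε * g v := by nlinarith [hgbα]
        exact le_of_mul_le_mul_left h6 hε
      have h7 := hlow s₀
      have h8 := hψSmK s₀ hs₀SmK
      have h9 := hstrict s₀ hs₀'
      have h10 : α * ψ s₀ ≤ α * 1 := mul_le_mul_of_nonneg_left h8 hαnn
      nlinarith
    have hgk : g k = -(t * g b) := by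
      have h1 : g (-k) = t * g b := by rw [hkb, map_smul, smul_eq_mul]
      rw [map_neg] at h1
      linarith
    have hψkk : ψ k = t := by rw [← hψ_symm k]; exact hψk
    rw [hgk, hψkk]
    nlinarith
  have hApos : ∀ a ∈ A, 0 ≤ g a + α * ψ a := by
    intro a ha
    rw [hgenA] at ha
    obtain ⟨t, ht, b, hb, rfl⟩ := ha
    have hψb : ψ b = 1 := by rw [hBA] at hb; exact hb.2
    rw [map_smul, smul_eq_mul, hψ_smul t ht, hψb, mul_one]
    have := hgBA b hb
    nlinarith
  refine ⟨⟨g, ?_, ?_, α, hαnn, hApos, ?_, fun k hk => hstrictK k (hcorK' ▸ hk)⟩, ?_⟩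
  · intro k hkK
    have h1 := hKlow k hkK
    have h2 : 0 ≤ α * ψ k := mul_nonneg hαnn (hψnn k)
    linarith
  · intro h0
    rw [h0] at hgs₀
    simp at hgs₀
    linarith
  · intro k hkK
    rw [hgenK] at hkK
    obtain ⟨t, ht, b, hb, hkb⟩ := hkK
    have hψb : ψ b = 1 := by rw [hBK] at hb; exact hb.2
    have hψkk : ψ k = t := by
      rw [← hψ_symm k, hkb, hψ_smul t ht, hψb, mul_one]
    have hgk : g k = -(t * g b) := by
      have h1 : g (-k) = t * g b := by rw [hkb, map_smul, smul_eq_mul]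
      rw [map_neg] at h1
      linarith
    rw [hgk, hψkk]
    have := hgBK b hb
    nlinarith
  · rw [Set.eq_empty_iff_forall_notMem]
    rintro x ⟨hxA, hxneg⟩
    have hxc : -x ∈ corK := Set.mem_neg.1 hxneg
    have h1 := hstrictK x (hcorK' ▸ hxc)
    have h2 := hApos x hxA
    linarith
end

section
/- (Strict cone separation) Let E be a real locally convex space, ψ a seminorm, K, A nontrivial cones with normlike-bases B_K, B_A, K pointed. Set S_{−K} := conv(−B_K), S_A^0 := conv(B_A ∪ {0}) and suppose one of cl(S_{−K}), cl(S_A^0) is compact. If cl(S_A^0) ∩ cl(S_{−K}) = ∅, then there exist x* ∈ E* and α > 0 with x*(k) > αψ(k) > 0 for all k ∈ K \ {0}, such that x*(a) + αψ(a) > 0 for all a ∈ A \ {0} and x*(k) + αψ(k) < 0 for all k ∈ −K \ {0}. In particular A ∩ (−K \ {0}) = ∅. -/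
/-- Strict cone separation theorem in a real locally convex space. -/
theorem stmt_18 {E : Type*} [AddCommGroup E] [Module ℝ E] [TopologicalSpace E]
    [IsTopologicalAddGroup E] [ContinuousSMul ℝ E] [LocallyConvexSpace ℝ E]
    [T2Space E] (ψ : E → ℝ)
    (hψ_add : ∀ x y : E, ψ (x + y) ≤ ψ x + ψ y)
    (hψ_smul : ∀ t : ℝ, 0 ≤ t → ∀ x : E, ψ (t • x) = t * ψ x)
    (hψ_symm : ∀ x : E, ψ (-x) = ψ x)
    (K A : Set E)
    (hKne : K ≠ {0}) (hKneE : K ≠ Set.univ)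
    (hAne : A ≠ {0}) (hAneE : A ≠ Set.univ)
    (hKpointed : K ∩ (-K) = {0})
    (hψposK : ∀ x ∈ K, x ≠ 0 → 0 < ψ x)
    (hψposA : ∀ x ∈ A, x ≠ 0 → 0 < ψ x)
    (BK BA : Set E)
    (hBK : BK = {x ∈ K | ψ x = 1}) (hBA : BA = {x ∈ A | ψ x = 1})
    (hgenK : K = {x : E | ∃ t : ℝ, 0 ≤ t ∧ ∃ b ∈ BK, x = t • b})
    (hgenA : A = {x : E | ∃ t : ℝ, 0 ≤ t ∧ ∃ b ∈ BA, x = t • b})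
    (SmK SA0 : Set E)
    (hSmK : SmK = convexHull ℝ (-BK))
    (hSA0 : SA0 = convexHull ℝ (BA ∪ {0}))
    (hcompact : IsCompact (closure SmK) ∨ IsCompact (closure SA0))
    (hdisj : closure SA0 ∩ closure SmK = ∅) :
    (∃ xs : E →L[ℝ] ℝ, ∃ α : ℝ, 0 < α ∧
      (∀ k ∈ K, k ≠ 0 → α * ψ k < xs k ∧ 0 < α * ψ k) ∧
      (∀ a ∈ A, a ≠ 0 → 0 < xs a + α * ψ a) ∧
      (∀ k : E, -k ∈ K → k ≠ 0 → xs k + α * ψ k < 0)) ∧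
    A ∩ {x : E | -x ∈ K ∧ x ≠ 0} = ∅ := by
  have hconvK : Convex ℝ (closure SmK) := by
    rw [hSmK]; exact (convex_convexHull ℝ _).closure
  have hconvA : Convex ℝ (closure SA0) := by
    rw [hSA0]; exact (convex_convexHull ℝ _).closure
  have hdisj' : Disjoint (closure SmK) (closure SA0) := by
    rw [Set.disjoint_iff_inter_eq_empty, Set.inter_comm]; exact hdisj
  -- separation: f < u on closure SmK, u < v, v < f on closure SA0
  obtain ⟨f, u, v, hfK, huv, hfA⟩ :
      ∃ (f : E →L[ℝ] ℝ) (u v : ℝ),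
        (∀ x ∈ closure SmK, f x < u) ∧ u < v ∧ ∀ x ∈ closure SA0, v < f x := by
    rcases hcompact with hc | hc
    · exact geometric_hahn_banach_compact_closed hconvK hc hconvA isClosed_closure hdisj'
    · exact geometric_hahn_banach_closed_compact hconvK isClosed_closure hconvA hc hdisj'
  have h0 : (0 : E) ∈ closure SA0 := by
    apply subset_closure
    rw [hSA0]
    exact subset_convexHull ℝ _ (Or.inr rfl)
  have hv0 : v < 0 := by simpa using hfA 0 h0
  -- on BK : f b > -u > -v > 0 ; set α = -v
  have hBKf : ∀ b ∈ BK, -u < f b := by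
    intro b hb
    have : f (-b) < u := hfK (-b) (subset_closure (hSmK ▸ subset_convexHull ℝ _ (Set.neg_mem_neg.2 hb)))
    simpa [neg_lt] using this
  have hBAf : ∀ b ∈ BA, v < f b := fun b hb =>
    hfA b (subset_closure (hSA0 ▸ subset_convexHull ℝ _ (Or.inl hb)))
  set α : ℝ := -v with hα
  have hαpos : 0 < α := by simp [hα]; linarith
  have hmain : (∀ k ∈ K, k ≠ 0 → α * ψ k < f k ∧ 0 < α * ψ k) ∧
      (∀ a ∈ A, a ≠ 0 → 0 < f a + α * ψ a) ∧
      (∀ k : E, -k ∈ K → k ≠ 0 → f k + α * ψ k < 0) := by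
    refine ⟨?_, ?_, ?_⟩
    · intro k hk hk0
      obtain ⟨t, ht, b, hb, rfl⟩ := hgenK ▸ hk
      have hψb : ψ b = 1 := (hBK ▸ hb).2
      have hψk : ψ (t • b) = t := by rw [hψ_smul t ht, hψb, mul_one]
      have ht0 : 0 < t := by
        rcases ht.lt_or_eq with h | h
        · exact h
        · exact absurd (by rw [← h, zero_smul]) hk0
      have hfb : -u < f b := hBKf b hb
      constructor
      · rw [hψk, map_smul, smul_eq_mul]
        have : α < f b := by simp only [hα]; linarith
        calc α * t = t * α := mul_comm _ _
          _ < t * f b := by exact (mul_lt_mul_iff_right₀ ht0).2 this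
      · rw [hψk]; exact mul_pos hαpos ht0
    · intro a ha ha0
      obtain ⟨t, ht, b, hb, rfl⟩ := hgenA ▸ ha
      have hψb : ψ b = 1 := (hBA ▸ hb).2
      have hψk : ψ (t • b) = t := by rw [hψ_smul t ht, hψb, mul_one]
      have ht0 : 0 < t := by
        rcases ht.lt_or_eq with h | h
        · exact h
        · exact absurd (by rw [← h, zero_smul]) ha0
      have hfb : v < f b := hBAf b hb
      rw [hψk, map_smul, smul_eq_mul]
      have : 0 < f b + α := by simp only [hα]; linarith
      calc (0:ℝ) = t * 0 := by ring
        _ < t * (f b + α) := (mul_lt_mul_iff_right₀ ht0).2 this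
        _ = t * f b + α * t := by ring
    · intro k hk hk0
      obtain ⟨t, ht, b, hb, hkb⟩ := hgenK ▸ hk
      have hψb : ψ b = 1 := (hBK ▸ hb).2
      have hkb' : k = t • (-b) := by rw [smul_neg, ← hkb, neg_neg]
      have hψk : ψ k = t := by
        rw [← hψ_symm k, hkb, hψ_smul t ht, hψb, mul_one]
      have ht0 : 0 < t := by
        rcases ht.lt_or_eq with h | h
        · exact h
        · refine absurd ?_ hk0
          rw [hkb', ← h, zero_smul]
      have hfb : f (-b) < u :=
        hfK (-b) (subset_closure (hSmK ▸ subset_convexHull ℝ _ (Set.neg_mem_neg.2 hb)))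
      have : f (-b) + α < 0 := by simp only [hα]; linarith
      rw [hkb', map_smul, smul_eq_mul, hψ_smul t ht, hψ_symm, hψb, mul_one]
      calc t * f (-b) + α * t = t * (f (-b) + α) := by ring
        _ < t * 0 := (mul_lt_mul_iff_right₀ ht0).2 this
        _ = 0 := by ring
  refine ⟨⟨f, α, hαpos, hmain.1, hmain.2.1, hmain.2.2⟩, ?_⟩
  ext a
  simp only [Set.mem_inter_iff, Set.mem_setOf_eq, Set.mem_empty_iff_false, iff_false, not_and]
  intro ha hmK hne
  exact absurd (hmain.2.2 a hmK hne) (not_lt.2 (le_of_lt (by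
    have := hmain.2.1 a ha hne; linarith)))
end

section
/- (Converse strict separation) Let E be a real topological vector space, ψ a seminorm, K, A nontrivial cones with normlike-bases B_K, B_A, K pointed, and B_K compact. If there exist a continuous linear functional x* and α ≥ 0 such that x*(a) + αψ(a) ≥ 0 for all a ∈ A and x*(k) + αψ(k) < 0 for all k ∈ −K \ {0}, then cl(conv(B_A ∪ {0})) ∩ cl(conv(−B_K)) = ∅. -/
/-- Converse strict separation theorem: a strict nonlinear separation of A
and −K (with compact base B_K) forces the closed convex hulls
cl(conv(B_A ∪ {0})) and cl(conv(−B_K)) to be disjoint. -/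
theorem stmt_19 {E : Type*} [AddCommGroup E] [Module ℝ E] [TopologicalSpace E]
    [IsTopologicalAddGroup E] [ContinuousSMul ℝ E] (ψ : E → ℝ)
    (hψ_add : ∀ x y : E, ψ (x + y) ≤ ψ x + ψ y)
    (hψ_smul : ∀ t : ℝ, 0 ≤ t → ∀ x : E, ψ (t • x) = t * ψ x)
    (hψ_symm : ∀ x : E, ψ (-x) = ψ x)
    (K A : Set E)
    (hKne : K ≠ {0}) (hKneE : K ≠ Set.univ)
    (hAne : A ≠ {0}) (hAneE : A ≠ Set.univ)
    (hKpointed : K ∩ (-K) = {0})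
    (hψposK : ∀ x ∈ K, x ≠ 0 → 0 < ψ x)
    (hψposA : ∀ x ∈ A, x ≠ 0 → 0 < ψ x)
    (BK BA : Set E)
    (hBK : BK = {x ∈ K | ψ x = 1}) (hBA : BA = {x ∈ A | ψ x = 1})
    (hgenK : K = {x : E | ∃ t : ℝ, 0 ≤ t ∧ ∃ b ∈ BK, x = t • b})
    (hgenA : A = {x : E | ∃ t : ℝ, 0 ≤ t ∧ ∃ b ∈ BA, x = t • b})
    (hBKcompact : IsCompact BK)
    (xs : E →L[ℝ] ℝ) (α : ℝ) (hα : 0 ≤ α)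
    (hsepA : ∀ a ∈ A, 0 ≤ xs a + α * ψ a)
    (hsepK : ∀ k : E, -k ∈ K → k ≠ 0 → xs k + α * ψ k < 0) :
    closure (convexHull ℝ (BA ∪ {0})) ∩ closure (convexHull ℝ (-BK)) = ∅ := by

  have hψ0 : ψ 0 = 0 := by
    have := hψ_smul 0 le_rfl 0
    simpa using this
  rcases Set.eq_empty_or_nonempty BK with hBKe | ⟨b0, hb0⟩
  · simp [hBKe]
  -- BK nonempty, -BK compact nonempty
  have hnegcpt : IsCompact (-BK) := hBKcompact.neg
  have hnegne : (-BK).Nonempty := ⟨-b0, by simpa using hb0⟩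
  obtain ⟨k0, hk0mem, hk0max⟩ := hnegcpt.exists_isMaxOn hnegne (xs.continuous.continuousOn)
  have hk0K : -k0 ∈ K := by
    have : -k0 ∈ BK := hk0mem
    rw [hBK] at this; exact this.1
  have hk0ψ : ψ k0 = 1 := by
    have : -k0 ∈ BK := hk0mem
    rw [hBK] at this
    rw [← hψ_symm k0]; exact this.2
  have hk0ne : k0 ≠ 0 := by
    intro h
    have : -k0 ∈ BK := hk0mem
    rw [hBK, h] at this
    simp [hψ0] at this
  have hk0lt : xs k0 < -α := by
    have := hsepK k0 hk0K hk0ne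
    rw [hk0ψ] at this; linarith
  ext x
  simp only [Set.mem_inter_iff, Set.mem_empty_iff_false, iff_false]
  rintro ⟨hx1, hx2⟩
  -- x in closed convex set {y | -α ≤ xs y}
  have h1 : -α ≤ xs x := by
    have hsub : BA ∪ {0} ⊆ {y : E | -α ≤ xs y} := by
      rintro y (hy | hy)
      · rw [hBA] at hy
        have ha := hsepA y hy.1
        rw [hy.2] at ha
        simp only [Set.mem_setOf_eq]; linarith
      · simp only [Set.mem_singleton_iff] at hy
        subst hy
        simp only [Set.mem_setOf_eq, map_zero]; linarith
    have hcc : closure (convexHull ℝ (BA ∪ {0})) ⊆ {y : E | -α ≤ xs y} :=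
      closure_minimal (convexHull_min hsub (convex_halfSpace_ge
        (xs : E →ₗ[ℝ] ℝ).isLinear (-α))) (isClosed_le continuous_const xs.continuous)
    exact hcc hx1
  have h2 : xs x ≤ xs k0 := by
    have hsub : -BK ⊆ {y : E | xs y ≤ xs k0} := fun y hy => hk0max hy
    have hcc : closure (convexHull ℝ (-BK)) ⊆ {y : E | xs y ≤ xs k0} :=
      closure_minimal (convexHull_min hsub (convex_halfSpace_le
        (xs : E →ₗ[ℝ] ℝ).isLinear (xs k0))) (isClosed_le xs.continuous continuous_const)
    exact hcc hx2
  linarith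
end
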